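/- Let ν:[0,∞)→ℝ^d be continuous and satisfy, for some c ∈ [1,∞), sup_{ξ′∈[0,ξ]} |ν(ξ′)| ≤ c(1 + ξ + |ν(ξ)|) for every ξ ∈ [0,∞). Let T > 0 and let ρ : ℝ^d × [0,T] → [0,∞) be measurable with ess sup_{t∈[0,T]} ‖ρ(·,t)‖_{L¹(ℝ^d)} < ∞ and with ν∘ρ ∈ L¹_loc(ℝ^d × [0,T])^d. Then for every R > 0, lim_{M→∞} ∫_0^T ∫_{B_R} ( sup_{ξ ∈ [M, min(M+1, ρ(x,t))]} |ν(ξ)| ) · 𝟙_{ρ(x,t) > M} dx dt = 0; that is, sup_{ξ∈[M,(M+1)∧ρ]} |ν(ξ)| 𝟙_{ρ>M} → 0 strongly in L¹_loc(ℝ^d × [0,T]) as M → ∞. -/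

import Mathlib

open MeasureTheory

/-- If `ν : [0,∞) → ℝ^d` satisfies the growth condition
`sup_{[0,ξ]} |ν| ≤ c(1 + ξ + |ν(ξ)|)` and `ρ ∈ L^∞_t L¹_x` is nonnegative with
`ν∘ρ ∈ L¹_loc`, then `sup_{ξ∈[M,(M+1)∧ρ]} |ν(ξ)| 𝟙_{ρ>M} → 0` in
`L¹_loc(ℝ^d × [0,T])` as `M → ∞`. -/
theorem stmt13 (d : ℕ) (T : ℝ) (hT : 0 < T) (c : ℝ) (hc : 1 ≤ c)
    (ν : ℝ → EuclideanSpace ℝ (Fin d)) (hνc : ContinuousOn ν (Set.Ici 0))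
    (hgrowth : ∀ ξ : ℝ, 0 ≤ ξ → ∀ ξ' ∈ Set.Icc 0 ξ, ‖ν ξ'‖ ≤ c * (1 + ξ + ‖ν ξ‖))
    (ρ : EuclideanSpace ℝ (Fin d) → ℝ → ℝ)
    (hρmeas : Measurable (Function.uncurry ρ))
    (hρnonneg : ∀ x t, 0 ≤ ρ x t)
    (hρL1 : ∃ C : ℝ, ∀ᵐ t ∂(volume.restrict (Set.Icc (0:ℝ) T)),
      Integrable (fun x => ρ x t) volume ∧ ∫ x, ρ x t ≤ C)
    (hνρ : ∀ R : ℝ, 0 < R →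
      IntegrableOn (fun p : EuclideanSpace ℝ (Fin d) × ℝ => ‖ν (ρ p.1 p.2)‖)
        ((Metric.ball (0 : EuclideanSpace ℝ (Fin d)) R) ×ˢ Set.Icc (0:ℝ) T) volume) :
    ∀ R : ℝ, 0 < R →
      Filter.Tendsto (fun M : ℝ =>
        ∫ p in (Metric.ball (0 : EuclideanSpace ℝ (Fin d)) R) ×ˢ Set.Icc (0:ℝ) T,
          Set.indicator {q : EuclideanSpace ℝ (Fin d) × ℝ | M < ρ q.1 q.2}
            (fun q =>
              sSup ((fun ξ => ‖ν ξ‖) '' Set.Icc M (min (M+1) (ρ q.1 q.2)))) p)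
        Filter.atTop (nhds 0) := by
  intro R hR
  obtain ⟨C, hC⟩ := hρL1
  set B := Metric.ball (0 : EuclideanSpace ℝ (Fin d)) R with hB
  set S := B ×ˢ Set.Icc (0:ℝ) T with hS
  set F : ℝ → EuclideanSpace ℝ (Fin d) × ℝ → ℝ := fun M p =>
    Set.indicator {q : EuclideanSpace ℝ (Fin d) × ℝ | M < ρ q.1 q.2}
      (fun q => sSup ((fun ξ => ‖ν ξ‖) '' Set.Icc M (min (M+1) (ρ q.1 q.2)))) p with hF
  set bound : EuclideanSpace ℝ (Fin d) × ℝ → ℝ :=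
    fun p => c * (1 + ρ p.1 p.2 + ‖ν (ρ p.1 p.2)‖) with hbound
  -- the sSup is always nonnegative
  have hsup_nonneg : ∀ (M r : ℝ),
      0 ≤ sSup ((fun ξ => ‖ν ξ‖) '' Set.Icc M (min (M+1) r)) := by
    intro M r
    apply Real.sSup_nonneg
    rintro x ⟨ξ, _, rfl⟩
    exact norm_nonneg _
  -- pointwise bound
  have hFle : ∀ M : ℝ, 0 ≤ M → ∀ p, ‖F M p‖ ≤ bound p := by
    intro M hM p
    have hbp : 0 ≤ bound p := by
      have : (0:ℝ) ≤ 1 + ρ p.1 p.2 + ‖ν (ρ p.1 p.2)‖ := by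
        have := hρnonneg p.1 p.2
        have := norm_nonneg (ν (ρ p.1 p.2))
        linarith
      have : (0:ℝ) ≤ c := le_trans zero_le_one hc
      positivity
    by_cases h : M < ρ p.1 p.2
    · have hFp : F M p = sSup ((fun ξ => ‖ν ξ‖) '' Set.Icc M (min (M+1) (ρ p.1 p.2))) :=
        Set.indicator_of_mem (show p ∈ {q : EuclideanSpace ℝ (Fin d) × ℝ | M < ρ q.1 q.2} from h) _
      rw [hFp, Real.norm_eq_abs, abs_of_nonneg (hsup_nonneg _ _)]
      apply csSup_le
      · refine ⟨‖ν M‖, ⟨M, ?_, rfl⟩⟩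
        exact ⟨le_refl M, le_min (by linarith) h.le⟩
      · rintro x ⟨ξ, ⟨hξ1, hξ2⟩, rfl⟩
        exact hgrowth (ρ p.1 p.2) (hρnonneg p.1 p.2) ξ
          ⟨le_trans hM hξ1, le_trans hξ2 (min_le_right _ _)⟩
    · have hFp : F M p = 0 :=
        Set.indicator_of_notMem (show p ∉ {q : EuclideanSpace ℝ (Fin d) × ℝ | M < ρ q.1 q.2} from h) _
      rw [hFp, norm_zero]; exact hbp
  -- measurability
  have hFmeas : ∀ M : ℝ, 0 ≤ M → Measurable (F M) := by
    intro M hM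
    have hIcc : Set.Icc M (M+1) ⊆ Set.Ici (0:ℝ) := fun x hx => le_trans hM hx.1
    have hbdd : BddAbove ((fun ξ => ‖ν ξ‖) '' Set.Icc M (M+1)) :=
      (isCompact_Icc.image_of_continuousOn ((hνc.mono hIcc).norm)).bddAbove
    set g : ℝ → ℝ := fun r =>
      Set.indicator (Set.Ioi M) (fun r => sSup ((fun ξ => ‖ν ξ‖) '' Set.Icc M (min (M+1) r))) r
      with hg
    have hgmono : Monotone g := by
      intro r r' hrr'
      by_cases h1 : M < r
      · have h2 : M < r' := lt_of_lt_of_le h1 hrr'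
        rw [hg]; beta_reduce
        rw [Set.indicator_of_mem (Set.mem_Ioi.mpr h1),
          Set.indicator_of_mem (Set.mem_Ioi.mpr h2)]
        apply csSup_le_csSup
        · exact hbdd.mono (Set.image_mono (Set.Icc_subset_Icc_right (min_le_left _ _)))
        · exact ⟨‖ν M‖, ⟨M, ⟨le_refl M, le_min (by linarith) h1.le⟩, rfl⟩⟩
        · exact Set.image_mono (Set.Icc_subset_Icc_right
            (min_le_min (le_refl _) hrr'))
      · rw [hg]; beta_reduce
        rw [Set.indicator_of_notMem (show r ∉ Set.Ioi M from h1)]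
        by_cases h2 : M < r'
        · rw [Set.indicator_of_mem (Set.mem_Ioi.mpr h2)]
          exact hsup_nonneg _ _
        · rw [Set.indicator_of_notMem (show r' ∉ Set.Ioi M from h2)]
    have hFg : F M = fun p => g (ρ p.1 p.2) := by
      funext p
      by_cases h : M < ρ p.1 p.2
      · rw [show F M p = _ from Set.indicator_of_mem
            (show p ∈ {q : EuclideanSpace ℝ (Fin d) × ℝ | M < ρ q.1 q.2} from h) _]
        exact (Set.indicator_of_mem (Set.mem_Ioi.mpr h)
          (fun r => sSup ((fun ξ => ‖ν ξ‖) '' Set.Icc M (min (M+1) r)))).symm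
      · rw [show F M p = 0 from Set.indicator_of_notMem
            (show p ∉ {q : EuclideanSpace ℝ (Fin d) × ℝ | M < ρ q.1 q.2} from h)
            (fun q => sSup ((fun ξ => ‖ν ξ‖) '' Set.Icc M (min (M+1) (ρ q.1 q.2))))]
        exact (Set.indicator_of_notMem (show ρ p.1 p.2 ∉ Set.Ioi M from h)
          (fun r => sSup ((fun ξ => ‖ν ξ‖) '' Set.Icc M (min (M+1) r)))).symm
    rw [hFg]
    exact hgmono.measurable.comp hρmeas
  -- integrability of the bound
  have hSfin : volume S < ⊤ := by
    rw [hS, Measure.volume_eq_prod, Measure.prod_prod]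
    exact ENNReal.mul_lt_top measure_ball_lt_top (by simp [Real.volume_Icc])
  have hρInt : IntegrableOn (fun p : EuclideanSpace ℝ (Fin d) × ℝ => ρ p.1 p.2) S volume := by
    have hmeas_swap : Measurable (fun q : ℝ × EuclideanSpace ℝ (Fin d) => ρ q.2 q.1) :=
      hρmeas.comp measurable_swap
    have hswap : Integrable (fun q : ℝ × EuclideanSpace ℝ (Fin d) => ρ q.2 q.1)
        ((volume.restrict (Set.Icc (0:ℝ) T)).prod (volume.restrict B)) := by
      have haesm : AEStronglyMeasurable (fun q : ℝ × EuclideanSpace ℝ (Fin d) => ρ q.2 q.1)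
          ((volume.restrict (Set.Icc (0:ℝ) T)).prod (volume.restrict B)) :=
        hmeas_swap.aestronglyMeasurable
      rw [integrable_prod_iff haesm]
      constructor
      · filter_upwards [hC] with t ht
        exact ht.1.restrict
      · have haesm2 : AEStronglyMeasurable
            (fun t : ℝ => ∫ x, ‖ρ x t‖ ∂(volume.restrict B))
            (volume.restrict (Set.Icc (0:ℝ) T)) :=
          haesm.norm.integral_prod_right'
        apply Integrable.mono' (g := fun _ => C)
          (integrableOn_const (C := C) (by simp [Real.volume_Icc]))
          haesm2
        filter_upwards [hC] with t ht
        have h1 : ∀ x, ‖ρ x t‖ = ρ x t := fun x => by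
          rw [Real.norm_eq_abs, abs_of_nonneg (hρnonneg x t)]
        have h2 : ∫ x, ‖ρ x t‖ ∂(volume.restrict B) = ∫ x in B, ρ x t := by
          simp only [h1]
        have h3 : (0:ℝ) ≤ ∫ x in B, ρ x t :=
          integral_nonneg (fun x => hρnonneg x t)
        have h4 : ∫ x in B, ρ x t ≤ ∫ x, ρ x t :=
          setIntegral_le_integral ht.1 (Filter.Eventually.of_forall (fun x => hρnonneg x t))
        rw [Real.norm_eq_abs, h2, abs_of_nonneg h3]
        exact le_trans h4 ht.2
    have := hswap.swap
    rw [Measure.prod_restrict] at this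
    rw [IntegrableOn, hS, Measure.volume_eq_prod]
    exact this
  have hboundInt : Integrable bound (volume.restrict S) := by
    have h1 : IntegrableOn (fun _ : EuclideanSpace ℝ (Fin d) × ℝ => (1:ℝ)) S volume :=
      integrableOn_const hSfin.ne
    have := ((h1.add hρInt).add (hνρ R hR)).const_mul c
    simpa [hbound, mul_add, add_assoc] using this
  -- pointwise convergence to 0
  have hlim : ∀ p : EuclideanSpace ℝ (Fin d) × ℝ,
      Filter.Tendsto (fun M => F M p) Filter.atTop (nhds 0) := by
    intro p
    apply Filter.Tendsto.congr' _ tendsto_const_nhds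
    filter_upwards [Filter.eventually_ge_atTop (ρ p.1 p.2)] with M hM
    exact (Set.indicator_of_notMem
      (show p ∉ {q : EuclideanSpace ℝ (Fin d) × ℝ | M < ρ q.1 q.2} from not_lt.mpr hM) _).symm
  have key := tendsto_integral_filter_of_dominated_convergence (μ := volume.restrict S)
    (F := F) (f := fun _ => (0:ℝ)) bound
    (by
      filter_upwards [Filter.eventually_ge_atTop (0:ℝ)] with M hM
      exact (hFmeas M hM).aestronglyMeasurable)
    (by
      filter_upwards [Filter.eventually_ge_atTop (0:ℝ)] with M hM
      exact Filter.Eventually.of_forall (hFle M hM))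
    hboundInt
    (Filter.Eventually.of_forall hlim)
  simpa using key
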